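/- arXiv:2108.06951 — 2 statements merged into one kernel-verified Lean document; each statement's English description precedes it below -/
import Mathlib

section
/- Let (ℝⁿ, g) be a rotationally symmetric metric dr² + f(r)² g_{S^{n−1}} with ε^{n−1} ≥ f^{n−1} on [0,∞) and f(r) = ε for r ≥ ε, let q be the origin and r₀ > 2ε. Set τ = π/(2r₀) and φ(x) = cos(τ d(x,q)). Then the Rayleigh quotient satisfies ∫|∇φ|² dμ / ∫φ² dμ ≤ τ² · (∫₀^{π/2} sin²s ds) / (∫_{τε}^{π/2} cos²s ds). -/
open MeasureTheory Filter Real Set Metric Topology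

/-- Abstract data of a Riemannian structure on a metric space `M`: the Riemannian
measure, the Laplace–Beltrami operator, the pointwise norm of the gradient,
the dimension, and the predicate "the Ricci curvature is nonnegative". -/
structure RiemannianSetup (M : Type*) [MetricSpace M] [MeasurableSpace M] where
  vol : Measure M
  lap : (M → ℝ) → M → ℝ
  gradNorm : (M → ℝ) → M → ℝ
  dim : ℕ
  RicciNonneg : Prop

/-- The first Dirichlet eigenvalue of a domain, defined as the infimum of the
Rayleigh quotients of nonzero test functions supported in the domain. -/
noncomputable def RiemannianSetup.lambda1 {M : Type*} [MetricSpace M] [MeasurableSpace M]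
    (G : RiemannianSetup M) (Ω : Set M) : ℝ :=
  sInf { r : ℝ | ∃ φ : M → ℝ, Continuous φ ∧ tsupport φ ⊆ Ω ∧
    0 < ∫ x, φ x ^ 2 ∂G.vol ∧
    r = (∫ x, G.gradNorm φ x ^ 2 ∂G.vol) / ∫ x, φ x ^ 2 ∂G.vol }

/-- A unit-speed geodesic ray (parametrized on `[0, ∞)`) in a metric space. -/
def IsRay {M : Type*} [MetricSpace M] (γ : ℝ → M) : Prop :=
  ∀ s t : ℝ, 0 ≤ s → 0 ≤ t → dist (γ s) (γ t) = |s - t|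

/-- `b` is the Busemann function of the ray `γ` : `b x = lim_{t→∞} (t - d(x, γ t))`. -/
def IsBusemann {M : Type*} [MetricSpace M] (γ : ℝ → M) (b : M → ℝ) : Prop :=
  ∀ x, Tendsto (fun t => t - dist x (γ t)) atTop (𝓝 (b x))

/-- The Rayleigh quotient of the radial test function `φ = cos(τ d(·,q))` on the
warped product, written radially: `∫|∇φ|² dμ = ω_{n-1}∫ h'(r)² f(r)^{n-1} dr`
and `∫φ² dμ = ω_{n-1}∫ h(r)² f(r)^{n-1} dr`, is bounded by
`τ² (∫₀^{π/2} sin²s ds)/(∫_{τε}^{π/2} cos²s ds)`. -/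
theorem stmt14 (n : ℕ) (hn : 2 ≤ n) (ε : ℝ) (hε : 0 < ε)
    (f : ℝ → ℝ) (hf0 : ∀ r, 0 ≤ r → 0 ≤ f r)
    (hfε : ∀ r, 0 ≤ r → f r ^ (n - 1) ≤ ε ^ (n - 1))
    (hfc : ∀ r, ε ≤ r → f r = ε)
    (r₀ : ℝ) (hr₀ : 2 * ε < r₀) (τ : ℝ) (hτ : τ = π / (2 * r₀)) :
    (∫ r in (0 : ℝ)..r₀, (τ * sin (τ * r)) ^ 2 * f r ^ (n - 1)) /
      (∫ r in (0 : ℝ)..r₀, cos (τ * r) ^ 2 * f r ^ (n - 1))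
    ≤ τ ^ 2 * (∫ s in (0 : ℝ)..(π / 2), sin s ^ 2) /
        ∫ s in (τ * ε)..(π / 2), cos s ^ 2 := by
  set m := n - 1 with hm
  have hr0 : 0 < r₀ := by linarith
  have hτ0 : 0 < τ := by rw [hτ]; positivity
  have hτr₀ : τ * r₀ = π / 2 := by rw [hτ]; field_simp
  have hεr₀ : ε < r₀ := by linarith
  have hτε : τ * ε < π / 2 := by rw [← hτr₀]; exact (mul_lt_mul_iff_right₀ hτ0).2 hεr₀
  have hτεpos : 0 < τ * ε := mul_pos hτ0 hε
  have hC : (0:ℝ) < ε ^ m := by positivity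
  have hB : 0 < ∫ s in (τ*ε)..(π/2), cos s ^ 2 := by
    apply intervalIntegral.intervalIntegral_pos_of_pos_on
    · exact Continuous.intervalIntegrable (by fun_prop) _ _
    · intro x hx
      have h1 : 0 < cos x := Real.cos_pos_of_mem_Ioo
        ⟨by linarith [hx.1, pi_pos], hx.2⟩
      positivity
    · exact hτε
  have hA : 0 ≤ ∫ s in (0:ℝ)..(π/2), sin s ^ 2 :=
    intervalIntegral.integral_nonneg (by linarith [pi_pos]) (fun x _ => sq_nonneg _)
  by_cases hmeas : AEMeasurable (fun r => f r ^ m) (volume.restrict (Ioc 0 r₀))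
  · -- main case
    have hbound : ∀ g : ℝ → ℝ, Continuous g →
        IntervalIntegrable (fun r => g r * f r ^ m) volume 0 r₀ := by
      intro g hg
      rw [intervalIntegrable_iff_integrableOn_Ioc_of_le hr0.le]
      have hmeas' : AEStronglyMeasurable (fun r => g r * f r ^ m)
          (volume.restrict (Ioc 0 r₀)) :=
        (hg.aemeasurable.mul hmeas).aestronglyMeasurable
      refine Integrable.mono' (g := fun r => |g r| * ε ^ m)
        ((hg.abs.mul continuous_const).integrableOn_Ioc) hmeas' ?_
      filter_upwards [ae_restrict_mem measurableSet_Ioc] with r hr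
      rw [Real.norm_eq_abs, abs_mul]
      have h0 : 0 ≤ f r ^ m := pow_nonneg (hf0 r hr.1.le) m
      rw [abs_of_nonneg h0]
      exact mul_le_mul_of_nonneg_left (hfε r hr.1.le) (abs_nonneg _)
    have hnum_le : (∫ r in (0:ℝ)..r₀, (τ*sin (τ*r))^2 * f r ^ m)
        ≤ ∫ r in (0:ℝ)..r₀, (τ*sin (τ*r))^2 * ε ^ m := by
      apply intervalIntegral.integral_mono_on hr0.le (hbound _ (by fun_prop))
        (Continuous.intervalIntegrable (by fun_prop) _ _)
      intro x hx
      exact mul_le_mul_of_nonneg_left (hfε x hx.1) (sq_nonneg _)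
    have hsub : ∀ a b : ℝ, (∫ r in a..b, sin (τ*r)^2)
        = τ⁻¹ * ∫ s in (τ*a)..(τ*b), sin s ^ 2 := by
      intro a b
      simpa only [smul_eq_mul] using
        intervalIntegral.integral_comp_mul_left (a := a) (b := b)
          (fun s => sin s ^ 2) hτ0.ne'
    have hsubc : ∀ a b : ℝ, (∫ r in a..b, cos (τ*r)^2)
        = τ⁻¹ * ∫ s in (τ*a)..(τ*b), cos s ^ 2 := by
      intro a b
      simpa only [smul_eq_mul] using
        intervalIntegral.integral_comp_mul_left (a := a) (b := b)
          (fun s => cos s ^ 2) hτ0.ne'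
    have hnumval : (∫ r in (0:ℝ)..r₀, (τ*sin (τ*r))^2 * ε ^ m)
        = (ε ^ m / τ) * (τ^2 * ∫ s in (0:ℝ)..(π/2), sin s ^ 2) := by
      have h2 : EqOn (fun r => (τ*sin (τ*r))^2 * ε ^ m)
          (fun r => (τ^2 * ε ^ m) * sin (τ*r)^2) (uIcc (0:ℝ) r₀) :=
        fun r _ => by simp only; ring
      rw [intervalIntegral.integral_congr h2, intervalIntegral.integral_const_mul,
        hsub 0 r₀]
      rw [mul_zero, hτr₀]
      field_simp
    have hden_ge : (ε ^ m / τ) * (∫ s in (τ*ε)..(π/2), cos s ^ 2)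
        ≤ ∫ r in (0:ℝ)..r₀, cos (τ*r)^2 * f r ^ m := by
      have hi1 : IntervalIntegrable (fun r => cos (τ*r)^2 * f r ^ m) volume 0 ε :=
        (hbound _ (by fun_prop)).mono_set
          (uIcc_subset_uIcc (by simp [hr0.le]) (by
            simp [uIcc_of_le hr0.le]; constructor <;> linarith))
      have hi2 : IntervalIntegrable (fun r => cos (τ*r)^2 * f r ^ m) volume ε r₀ :=
        (hbound _ (by fun_prop)).mono_set
          (uIcc_subset_uIcc (by
            simp [uIcc_of_le hr0.le]; constructor <;> linarith) (by simp [hr0.le]))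
      have hsplit : (∫ r in (0:ℝ)..r₀, cos (τ*r)^2 * f r ^ m)
          = (∫ r in (0:ℝ)..ε, cos (τ*r)^2 * f r ^ m)
            + ∫ r in ε..r₀, cos (τ*r)^2 * f r ^ m :=
        (intervalIntegral.integral_add_adjacent_intervals hi1 hi2).symm
      have hpos1 : 0 ≤ ∫ r in (0:ℝ)..ε, cos (τ*r)^2 * f r ^ m :=
        intervalIntegral.integral_nonneg hε.le
          (fun x hx => mul_nonneg (sq_nonneg _) (pow_nonneg (hf0 x hx.1) m))
      have heq : (∫ r in ε..r₀, cos (τ*r)^2 * f r ^ m)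
          = ∫ r in ε..r₀, cos (τ*r)^2 * ε ^ m := by
        apply intervalIntegral.integral_congr
        intro r hr
        rw [uIcc_of_le hεr₀.le] at hr
        simp only [hfc r hr.1]
      have hval : (∫ r in ε..r₀, cos (τ*r)^2 * ε ^ m)
          = (ε ^ m / τ) * ∫ s in (τ*ε)..(π/2), cos s ^ 2 := by
        rw [intervalIntegral.integral_mul_const, hsubc ε r₀, hτr₀]
        ring
      rw [hsplit, heq, hval]
      linarith
    have hfinal := div_le_div₀
      (mul_nonneg (div_pos hC hτ0).le
        (mul_nonneg (sq_nonneg τ) hA))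
      (hnum_le.trans hnumval.le)
      (mul_pos (div_pos hC hτ0) hB) hden_ge
    calc (∫ r in (0:ℝ)..r₀, (τ*sin (τ*r))^2 * f r ^ m) /
          (∫ r in (0:ℝ)..r₀, cos (τ*r)^2 * f r ^ m)
        ≤ ((ε ^ m / τ) * (τ^2 * ∫ s in (0:ℝ)..(π/2), sin s ^ 2))
          / ((ε ^ m / τ) * ∫ s in (τ*ε)..(π/2), cos s ^ 2) := hfinal
      _ = τ ^ 2 * (∫ s in (0:ℝ)..(π/2), sin s ^ 2) /
          ∫ s in (τ*ε)..(π/2), cos s ^ 2 := by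
          rw [mul_div_mul_left _ _ (div_pos hC hτ0).ne']
  · -- degenerate case : both integrals vanish
    have key : ∀ g : ℝ → ℝ, Continuous g →
        (∀ᵐ r ∂(volume.restrict (Ioc 0 r₀)), g r ≠ 0) →
        ¬ IntervalIntegrable (fun r => g r * f r ^ m) volume 0 r₀ := by
      intro g hg hgne hint
      apply hmeas
      rw [intervalIntegrable_iff_integrableOn_Ioc_of_le hr0.le] at hint
      have h1 : AEMeasurable (fun r => g r * f r ^ m) (volume.restrict (Ioc 0 r₀)) :=
        hint.aemeasurable
      have h2 : AEMeasurable (fun r => (g r)⁻¹ * (g r * f r ^ m))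
          (volume.restrict (Ioc 0 r₀)) := (hg.aemeasurable.inv).mul h1
      refine h2.congr ?_
      filter_upwards [hgne] with r hr
      rw [inv_mul_cancel_left₀ hr]
    have hsin : ∀ᵐ r ∂(volume.restrict (Ioc 0 r₀)), (τ * sin (τ*r))^2 ≠ 0 := by
      filter_upwards [ae_restrict_mem measurableSet_Ioc] with r hr
      have h1 : 0 < sin (τ * r) := by
        apply sin_pos_of_pos_of_lt_pi (mul_pos hτ0 hr.1)
        have : τ * r ≤ π/2 := by
          rw [← hτr₀]; exact mul_le_mul_of_nonneg_left hr.2 hτ0.le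
        linarith [pi_pos]
      positivity
    have hcos : ∀ᵐ r ∂(volume.restrict (Ioc 0 r₀)), cos (τ*r)^2 ≠ 0 := by
      have hne : ∀ᵐ r ∂(volume.restrict (Ioc 0 r₀)), r ≠ r₀ := by
        apply ae_restrict_of_ae
        rw [ae_iff]
        simp
      filter_upwards [ae_restrict_mem measurableSet_Ioc, hne] with r hr hrne
      have h1 : 0 < cos (τ * r) := by
        apply cos_pos_of_mem_Ioo
        constructor
        · have := mul_pos hτ0 hr.1; linarith [pi_pos]
        · rw [← hτr₀]
          exact (mul_lt_mul_iff_right₀ hτ0).2 (lt_of_le_of_ne hr.2 hrne)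
      positivity
    rw [intervalIntegral.integral_undef (key _ (by fun_prop) hsin),
      intervalIntegral.integral_undef (key _ (by fun_prop) hcos)]
    rw [zero_div]
    exact div_nonneg (mul_nonneg (sq_nonneg _) hA) hB.le
end

section
/- Let u be a nonnegative first Dirichlet eigenfunction on B₁(p) with max u = u(x₁) = 1 and eigenvalue λ₁, in a complete noncompact manifold with Ric ≥ 0, and let b be the Busemann function of a ray from p. If arcsin(u(x)) ≤ √λ₁(1 − b(x)) on B₁(p) and λ₁ = π²/16, then b(x₁) = −1, contradicting b(x₁) ≥ −d(x₁,p) > −1. Hence λ₁(B₁(p)) ≠ π²/16. -/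
open MeasureTheory Filter Real Set Metric Topology

/-- Ruling out equality: if the C⁰ estimate holds on `B₁(p)` and the first
eigenfunction attains its maximum `1` at `x₁ ∈ B₁(p)`, then
`λ₁(B₁(p)) ≠ π²/16`. -/
theorem stmt17 {M : Type*} [MetricSpace M] [MeasurableSpace M] [CompleteSpace M] [NoncompactSpace M]
    (G : RiemannianSetup M) (hRic : G.RicciNonneg) (p : M)
    (γ : ℝ → M) (hγ : IsRay γ) (hγ0 : γ 0 = p)
    (b : M → ℝ) (hb : IsBusemann γ b)
    (u : M → ℝ) (lam : ℝ) (hlam : lam = G.lambda1 (Metric.ball p 1))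
    (hcont : Continuous u) (hsupp : tsupport u ⊆ Metric.ball p 1)
    (hnn : ∀ x, 0 ≤ u x) (hle : ∀ x, u x ≤ 1)
    (heig : ∀ x ∈ Metric.ball p 1, G.lap u x = -lam * u x)
    (x₁ : M) (hx₁ : x₁ ∈ Metric.ball p 1) (hmax : u x₁ = 1)
    (hest : ∀ x ∈ Metric.ball p 1, arcsin (u x) ≤ sqrt lam * (1 - b x)) :
    G.lambda1 (Metric.ball p 1) ≠ π ^ 2 / 16 := by
  intro h
  have hlam' : lam = π ^ 2 / 16 := hlam.trans h
  have hpi : (0:ℝ) < π := Real.pi_pos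
  have hsq : Real.sqrt lam = π / 4 := by
    rw [hlam']
    rw [show π ^ 2 / 16 = (π / 4) ^ 2 by ring]
    exact Real.sqrt_sq (by positivity)
  have h1 := hest x₁ hx₁
  rw [hmax, Real.arcsin_one, hsq] at h1
  -- deduce b x₁ ≤ -1
  have hb1 : b x₁ ≤ -1 := by nlinarith
  -- lower bound on Busemann
  have hlb : -dist x₁ p ≤ b x₁ := by
    refine ge_of_tendsto (hb x₁) ?_
    filter_upwards [eventually_ge_atTop (0:ℝ)] with t ht
    have hd : dist x₁ (γ t) ≤ dist x₁ p + t := by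
      have := hγ 0 t le_rfl ht
      rw [hγ0] at this
      calc dist x₁ (γ t) ≤ dist x₁ p + dist p (γ t) := dist_triangle _ _ _
        _ = dist x₁ p + t := by rw [this, abs_of_nonpos (by linarith)]; ring
    linarith
  have : dist x₁ p < 1 := mem_ball.mp hx₁
  linarith
end
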